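/- Let r ≥ 2 and let L(x,y) = ∑_{T∈U_r} wt_y(T) where wt_y(T) = ∏_{v=2}^{r}( x_{f_T(v)} ∑_{u∈h_T(v)} y_{v,u} ). Then y_{1,1}·L(x,y) = ∑_{π ∈ Π_1({1,...,r})} D(π) · ∑_{T ∈ E(π)} κ(T), where the sum is over set partitions π of {1,...,r} having {1} as a block, D(π) = ∑_{g} ∏_{i=1}^{r} y_{i,g(i)} sums over dominating functions g: {1,...,r} → {1,...,r} (g(i) ≥ i for all i) whose functional digraph has connected components exactly the blocks of π, E(π) is the set of unordered increasing trees T on {1,...,r} such that every block of π is a chain in T (for i < j in the same block, i is an ancestor of j), and κ(T) = ∏_{i=1}^{r} x_i^{σ_i(T)} with σ_i(T) the number of children of vertex i. -/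
import Mathlib


open scoped Classical

/-- An unordered increasing tree on the vertex set `{1,…,r}` (vertex `i+1` is
represented by `(i : Fin r)`): a parent function `p` with `p 1 = 1` (index `0`)
and `f_T(v) < v` for every nonroot vertex `v`; the root is `1`. -/
def IncTree (r : ℕ) : Type :=
  {p : Fin r → Fin r // ∀ v : Fin r, (v.val = 0 → p v = v) ∧ (v.val ≠ 0 → p v < v)}

noncomputable instance (r : ℕ) : Fintype (IncTree r) := by
  unfold IncTree; infer_instance

/-- The hook `h_T(v)` of a vertex `v` (as a set): `v` together with all of its
descendants, i.e. all `u` some iterated parent of which is `v`. -/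
noncomputable def hook {r : ℕ} (p : Fin r → Fin r) (v : Fin r) : Finset (Fin r) :=
  Finset.univ.filter (fun u => ∃ k ∈ Finset.range (r + 1), p^[k] u = v)

/-- The number of sons `σ_i(T)` of the vertex `i`. -/
noncomputable def sons {r : ℕ} (T : IncTree r) (i : Fin r) : ℕ :=
  (Finset.univ.filter (fun v : Fin r => v.val ≠ 0 ∧ T.val v = i)).card

/-- The polynomial ring over `ℤ` in the commuting indeterminates `x_i` and
`y_{i,j}`. -/
abbrev R : Type := MvPolynomial (ℕ ⊕ ℕ × ℕ) ℤ

/-- The indeterminate `x_n`. -/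
noncomputable def x (n : ℕ) : R := MvPolynomial.X (Sum.inl n)

/-- The indeterminate `y_{i,j}`. -/
noncomputable def y (i j : ℕ) : R := MvPolynomial.X (Sum.inr (i, j))

/-- `π` is a set partition of `{1,…,r}` having `{1}` (the vertex of index `0`)
as a block. -/
def IsPartition1 {r : ℕ} (π : Finset (Finset (Fin r))) : Prop :=
  (∀ B ∈ π, B.Nonempty) ∧ (∀ v : Fin r, ∃! B, B ∈ π ∧ v ∈ B) ∧
    Finset.univ.filter (fun v : Fin r => v.val = 0) ∈ π

/-- The function `g` is dominating: `g(i) ≥ i` for all `i`. -/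
def Dominating {r : ℕ} (g : Fin r → Fin r) : Prop := ∀ i, i ≤ g i

/-- The partition induced by `g` is `π`: two elements lie in the same block of
`π` exactly when they lie in the same weakly connected component of the
functional digraph of `g` (with edges `(i, g i)`). -/
def InducesPartition {r : ℕ} (g : Fin r → Fin r) (π : Finset (Finset (Fin r))) : Prop :=
  ∀ i j : Fin r, (∃ B ∈ π, i ∈ B ∧ j ∈ B) ↔ Relation.EqvGen (fun a b => g a = b) i j

/-- `D(π) = ∑_g ∏_i y_{i,g(i)}`, summed over dominating functions on `{1,…,r}`
with induced partition `π`. -/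
noncomputable def D {r : ℕ} (π : Finset (Finset (Fin r))) : R :=
  ∑ g ∈ Finset.univ.filter
      (fun g : Fin r → Fin r => Dominating g ∧ InducesPartition g π),
    ∏ i : Fin r, y (i.val + 1) ((g i).val + 1)

/-- `T ∈ E(π)`: every block of `π` is a chain of ancestors in `T`. -/
def MemE {r : ℕ} (T : IncTree r) (π : Finset (Finset (Fin r))) : Prop :=
  ∀ B ∈ π, ∀ i ∈ B, ∀ j ∈ B, i ≤ j → j ∈ hook T.val i

/-- `κ(T) = ∏_i x_i^{σ_i(T)}` where `σ_i(T)` is the number of sons of `i`. -/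
noncomputable def kappa {r : ℕ} (T : IncTree r) : R :=
  ∏ i : Fin r, x (i.val + 1) ^ (sons T i)

namespace FGLaux

variable {r : ℕ}

abbrev IsParent (p : Fin r → Fin r) : Prop :=
  ∀ v : Fin r, (v.val = 0 → p v = v) ∧ (v.val ≠ 0 → p v < v)

lemma parent_le {p : Fin r → Fin r} (hp : IsParent p) (v : Fin r) : p v ≤ v := by
  rcases eq_or_ne v.val 0 with h | h
  · exact le_of_eq ((hp v).1 h)
  · exact le_of_lt ((hp v).2 h)

lemma iterate_le {p : Fin r → Fin r} (hp : IsParent p) (k : ℕ) (v : Fin r) :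
    p^[k] v ≤ v := by
  induction k with
  | zero => simp
  | succ k ih =>
    rw [Function.iterate_succ_apply']
    exact le_trans (parent_le hp _) ih

lemma iterate_zero_fix {p : Fin r → Fin r} (hp : IsParent p) (k : ℕ) {v : Fin r}
    (hv : v.val = 0) : p^[k] v = v := by
  induction k with
  | zero => rfl
  | succ k ih =>
    rw [Function.iterate_succ_apply', ih]
    exact (hp v).1 hv

lemma mem_hook_iff {p : Fin r → Fin r} (hp : IsParent p) {u v : Fin r} :
    u ∈ hook p v ↔ ∃ k, p^[k] u = v := by
  constructor
  · intro h
    simp only [hook, Finset.mem_filter, Finset.mem_range] at h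
    obtain ⟨-, k, -, hk⟩ := h
    exact ⟨k, hk⟩
  · intro hex
    set k := Nat.find hex with hkdef
    have hk : p^[k] u = v := Nat.find_spec hex
    have key : ∀ i, i ≤ k → (p^[i] u).val + i ≤ u.val := by
      intro i
      induction i with
      | zero => simp
      | succ i ih =>
        intro hik
        have h1 := ih (Nat.le_of_succ_le hik)
        have hne : (p^[i] u).val ≠ 0 := by
          intro h0
          have : p^[k] u = p^[i] u := by
            have : p^[(k - i) + i] u = p^[k - i] (p^[i] u) :=
              Function.iterate_add_apply p (k - i) i u
            rw [Nat.sub_add_cancel (Nat.le_of_succ_le hik)] at this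
            rw [this, iterate_zero_fix hp _ h0]
          have : p^[i] u = v := by rw [← this, hk]
          exact Nat.find_min hex (by omega) this
        have hlt : (p^[i + 1] u).val < (p^[i] u).val := by
          rw [Function.iterate_succ_apply']
          exact (hp _).2 hne
        omega
    have hkle : k ≤ u.val := by
      have := key k le_rfl
      omega
    simp only [hook, Finset.mem_filter, Finset.mem_range]
    exact ⟨Finset.mem_univ _, k, by omega, hk⟩

lemma self_mem_hook {p : Fin r → Fin r} (hp : IsParent p) (v : Fin r) :
    v ∈ hook p v := (mem_hook_iff hp).2 ⟨0, rfl⟩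

lemma le_of_mem_hook {p : Fin r → Fin r} (hp : IsParent p) {u v : Fin r}
    (h : u ∈ hook p v) : v ≤ u := by
  obtain ⟨k, hk⟩ := (mem_hook_iff hp).1 h
  exact hk ▸ iterate_le hp k u

lemma hook_trans {p : Fin r → Fin r} (hp : IsParent p) {u v w : Fin r}
    (h1 : u ∈ hook p v) (h2 : w ∈ hook p u) : w ∈ hook p v := by
  obtain ⟨k, hk⟩ := (mem_hook_iff hp).1 h1
  obtain ⟨l, hl⟩ := (mem_hook_iff hp).1 h2
  exact (mem_hook_iff hp).2 ⟨k + l, by rw [Function.iterate_add_apply, hl, hk]⟩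

lemma hook_comparable {p : Fin r → Fin r} (hp : IsParent p) {w a b : Fin r}
    (ha : w ∈ hook p a) (hb : w ∈ hook p b) : a ∈ hook p b ∨ b ∈ hook p a := by
  obtain ⟨k, hk⟩ := (mem_hook_iff hp).1 ha
  obtain ⟨l, hl⟩ := (mem_hook_iff hp).1 hb
  rcases le_total k l with h | h
  · left
    refine (mem_hook_iff hp).2 ⟨l - k, ?_⟩
    rw [← hk, ← Function.iterate_add_apply, Nat.sub_add_cancel h, hl]
  · right
    refine (mem_hook_iff hp).2 ⟨k - l, ?_⟩
    rw [← hl, ← Function.iterate_add_apply, Nat.sub_add_cancel h, hk]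

variable {r : ℕ}

abbrev Rel (g : Fin r → Fin r) : Fin r → Fin r → Prop := fun a b => g a = b

lemma eqvGen_iterate (g : Fin r → Fin r) (i : Fin r) (k : ℕ) :
    Relation.EqvGen (Rel g) i (g^[k] i) := by
  induction k with
  | zero => exact Relation.EqvGen.refl i
  | succ k ih =>
    exact Relation.EqvGen.trans _ _ _ ih
      (Relation.EqvGen.rel _ _ (by rw [Function.iterate_succ_apply']))

lemma eqvGen_iff (g : Fin r → Fin r) (i j : Fin r) :
    Relation.EqvGen (Rel g) i j ↔ ∃ k l, g^[k] i = g^[l] j := by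
  constructor
  · intro h
    induction h with
    | rel a b hab => exact ⟨1, 0, by simpa using hab⟩
    | refl a => exact ⟨0, 0, rfl⟩
    | symm a b _ ih => obtain ⟨k, l, h⟩ := ih; exact ⟨l, k, h.symm⟩
    | trans a b c _ _ ih1 ih2 =>
      obtain ⟨k, l, h1⟩ := ih1
      obtain ⟨k', l', h2⟩ := ih2
      refine ⟨k' + k, l + l', ?_⟩
      calc g^[k' + k] a = g^[k'] (g^[k] a) := Function.iterate_add_apply g k' k a
        _ = g^[k'] (g^[l] b) := by rw [h1]
        _ = g^[k' + l] b := (Function.iterate_add_apply g k' l b).symm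
        _ = g^[l + k'] b := by rw [Nat.add_comm]
        _ = g^[l] (g^[k'] b) := Function.iterate_add_apply g l k' b
        _ = g^[l] (g^[l'] c) := by rw [h2]
        _ = g^[l + l'] c := (Function.iterate_add_apply g l l' c).symm
  · rintro ⟨k, l, h⟩
    exact Relation.EqvGen.trans _ _ _ (h ▸ eqvGen_iterate g i k)
      (Relation.EqvGen.symm _ _ (eqvGen_iterate g j l))

lemma eqvGen_zero_iff {g : Fin r → Fin r} (hd : Dominating g)
    (hz : ∀ v : Fin r, v.val = 0 → g v = v) {i j : Fin r}
    (h : Relation.EqvGen (Rel g) i j) : i.val = 0 ↔ j.val = 0 := by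
  induction h with
  | rel a b hab =>
    constructor
    · intro h0; rw [← hab, hz a h0]; exact h0
    · intro h0
      have := hd a
      rw [hab] at this
      have : a.val ≤ b.val := this
      omega
  | refl a => exact Iff.rfl
  | symm a b _ ih => exact ih.symm
  | trans a b c _ _ ih1 ih2 => exact ih1.trans ih2

noncomputable def cls (g : Fin r → Fin r) (i : Fin r) : Finset (Fin r) :=
  Finset.univ.filter (fun j => Relation.EqvGen (Rel g) i j)

noncomputable def Pg (g : Fin r → Fin r) : Finset (Finset (Fin r)) :=
  Finset.univ.image (cls g)

lemma mem_cls {g : Fin r → Fin r} {i j : Fin r} :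
    j ∈ cls g i ↔ Relation.EqvGen (Rel g) i j := by simp [cls]

lemma mem_cls_self (g : Fin r → Fin r) (i : Fin r) : i ∈ cls g i :=
  mem_cls.2 (Relation.EqvGen.refl i)

lemma cls_mem_Pg (g : Fin r → Fin r) (i : Fin r) : cls g i ∈ Pg g :=
  Finset.mem_image_of_mem _ (Finset.mem_univ i)

lemma cls_eq {g : Fin r → Fin r} {i j : Fin r}
    (h : Relation.EqvGen (Rel g) i j) : cls g i = cls g j := by
  ext a
  simp only [mem_cls]
  exact ⟨fun ha => Relation.EqvGen.trans _ _ _ (Relation.EqvGen.symm _ _ h) ha,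
    fun ha => Relation.EqvGen.trans _ _ _ h ha⟩

lemma Pg_nonempty {g : Fin r → Fin r} {B : Finset (Fin r)} (hB : B ∈ Pg g) :
    B.Nonempty := by
  obtain ⟨i, -, rfl⟩ := Finset.mem_image.1 hB
  exact ⟨i, mem_cls_self g i⟩

lemma Pg_existsUnique (g : Fin r → Fin r) (v : Fin r) :
    ∃! B, B ∈ Pg g ∧ v ∈ B := by
  refine ⟨cls g v, ⟨cls_mem_Pg g v, mem_cls_self g v⟩, ?_⟩
  rintro B ⟨hB, hv⟩
  obtain ⟨i, -, rfl⟩ := Finset.mem_image.1 hB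
  exact cls_eq (mem_cls.1 hv)

lemma zero_block {g : Fin r → Fin r} (hd : Dominating g)
    (hz : ∀ v : Fin r, v.val = 0 → g v = v) (hr0 : 0 < r) :
    Finset.univ.filter (fun v : Fin r => v.val = 0) ∈ Pg g := by
  have h : Finset.univ.filter (fun v : Fin r => v.val = 0) = cls g ⟨0, hr0⟩ := by
    ext j
    simp only [Finset.mem_filter, Finset.mem_univ, true_and, mem_cls]
    constructor
    · intro h0
      have : j = (⟨0, hr0⟩ : Fin r) := Fin.ext h0
      rw [this]
      exact Relation.EqvGen.refl _
    · intro h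
      exact (eqvGen_zero_iff hd hz h).1 rfl
  rw [h]
  exact cls_mem_Pg g _

lemma induces_Pg (g : Fin r → Fin r) : InducesPartition g (Pg g) := by
  intro i j
  constructor
  · rintro ⟨B, hB, hi, hj⟩
    obtain ⟨a, -, rfl⟩ := Finset.mem_image.1 hB
    exact Relation.EqvGen.trans _ _ _
      (Relation.EqvGen.symm _ _ (mem_cls.1 hi)) (mem_cls.1 hj)
  · intro h
    exact ⟨cls g i, cls_mem_Pg g i, mem_cls_self g i, mem_cls.2 h⟩

lemma block_eq_cls {g : Fin r → Fin r} {π : Finset (Finset (Fin r))}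
    (hπ : ∀ v : Fin r, ∃! B, B ∈ π ∧ v ∈ B) (hI : InducesPartition g π)
    {B : Finset (Fin r)} {i : Fin r} (hB : B ∈ π) (hi : i ∈ B) :
    B = cls g i := by
  ext j
  rw [mem_cls]
  constructor
  · intro hj; exact (hI i j).1 ⟨B, hB, hi, hj⟩
  · intro hj
    obtain ⟨B', hB', hi', hj'⟩ := (hI i j).2 hj
    obtain ⟨Bu, -, hU⟩ := hπ i
    have e1 : B = Bu := hU B ⟨hB, hi⟩
    have e2 : B' = Bu := hU B' ⟨hB', hi'⟩
    rw [e1, ← e2]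
    exact hj'

lemma partition_unique {g : Fin r → Fin r} {π : Finset (Finset (Fin r))}
    (hne : ∀ B ∈ π, B.Nonempty) (hπ : ∀ v : Fin r, ∃! B, B ∈ π ∧ v ∈ B)
    (hI : InducesPartition g π) : π = Pg g := by
  ext B
  constructor
  · intro hB
    obtain ⟨i, hi⟩ := hne B hB
    rw [block_eq_cls hπ hI hB hi]
    exact cls_mem_Pg g i
  · intro hB
    obtain ⟨i, -, rfl⟩ := Finset.mem_image.1 hB
    obtain ⟨B', ⟨hB', hi'⟩, -⟩ := hπ i
    rw [← block_eq_cls hπ hI hB' hi']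
    exact hB'



lemma iterate_mem_hook {p g : Fin r → Fin r} (hp : IsParent p)
    (hz : ∀ v : Fin r, v.val = 0 → g v = v)
    (hh : ∀ v : Fin r, v.val ≠ 0 → g v ∈ hook p v) (v : Fin r) (k : ℕ) :
    g^[k] v ∈ hook p v := by
  induction k with
  | zero => exact self_mem_hook hp v
  | succ k ih =>
    rw [Function.iterate_succ_apply']
    set u := g^[k] v with hu
    have hgu : g u ∈ hook p u := by
      rcases eq_or_ne u.val 0 with h0 | h0
      · rw [hz u h0]; exact self_mem_hook hp u
      · exact hh u h0
    exact hook_trans hp ih hgu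

lemma key_lemma (T : IncTree r) (g : Fin r → Fin r) :
    ((∀ v : Fin r, v.val = 0 → g v = v) ∧
      ∀ v : Fin r, v.val ≠ 0 → g v ∈ hook T.val v)
    ↔ (Dominating g ∧ (∀ v : Fin r, v.val = 0 → g v = v) ∧ MemE T (Pg g)) := by
  have hp : IsParent T.val := T.property
  constructor
  · rintro ⟨hz, hh⟩
    have hd : Dominating g := by
      intro i
      rcases eq_or_ne i.val 0 with h0 | h0
      · rw [hz i h0]
      · exact le_of_mem_hook hp (hh i h0)
    refine ⟨hd, hz, ?_⟩
    intro B hB i hi j hj hij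
    obtain ⟨a, -, rfl⟩ := Finset.mem_image.1 hB
    have hijE : Relation.EqvGen (Rel g) i j :=
      Relation.EqvGen.trans _ _ _
        (Relation.EqvGen.symm _ _ (mem_cls.1 hi)) (mem_cls.1 hj)
    obtain ⟨k, l, hkl⟩ := (eqvGen_iff g i j).1 hijE
    have hwi : g^[k] i ∈ hook T.val i := iterate_mem_hook hp hz hh i k
    have hwj : g^[k] i ∈ hook T.val j := hkl ▸ iterate_mem_hook hp hz hh j l
    rcases hook_comparable hp hwi hwj with h | h
    · -- i ∈ hook j, so j ≤ i, hence i = j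
      have := le_of_mem_hook hp h
      have : i = j := le_antisymm hij this
      rw [← this]
      exact self_mem_hook hp i
    · exact h
  · rintro ⟨hd, hz, hm⟩
    refine ⟨hz, ?_⟩
    intro v hv
    have h1 : v ∈ cls g v := mem_cls_self g v
    have h2 : g v ∈ cls g v := mem_cls.2 (Relation.EqvGen.rel _ _ rfl)
    exact hm (cls g v) (cls_mem_Pg g v) v h1 (g v) h2 (hd v)

lemma hz_of_induces {g : Fin r → Fin r} {π : Finset (Finset (Fin r))}
    (hπ : IsPartition1 π) (hI : InducesPartition g π) :
    ∀ v : Fin r, v.val = 0 → g v = v := by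
  intro v hv
  have hZ := hπ.2.2
  have hvZ : v ∈ Finset.univ.filter (fun v : Fin r => v.val = 0) := by
    simp [hv]
  obtain ⟨B, hB, hvB, hgvB⟩ := (hI v (g v)).2 (Relation.EqvGen.rel _ _ rfl)
  obtain ⟨Bu, -, hU⟩ := hπ.2.1 v
  have e1 : B = Bu := hU B ⟨hB, hvB⟩
  have e2 : Finset.univ.filter (fun v : Fin r => v.val = 0) = Bu :=
    hU _ ⟨hZ, hvZ⟩
  have : g v ∈ Finset.univ.filter (fun v : Fin r => v.val = 0) := by
    rw [e2, ← e1]; exact hgvB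
  have h0 : (g v).val = 0 := by simpa using this
  exact Fin.ext (by omega)

noncomputable def wy (g : Fin r → Fin r) : R :=
  ∏ i : Fin r, y (i.val + 1) ((g i).val + 1)

noncomputable def tf (T : IncTree r) (v : Fin r) : Finset (Fin r) :=
  if v.val = 0 then {v} else hook T.val v

lemma mem_piFinset_tf {T : IncTree r} {g : Fin r → Fin r} :
    g ∈ Fintype.piFinset (tf T) ↔
      (∀ v : Fin r, v.val = 0 → g v = v) ∧
        ∀ v : Fin r, v.val ≠ 0 → g v ∈ hook T.val v := by
  rw [Fintype.mem_piFinset]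
  constructor
  · intro h
    constructor
    · intro v hv
      have := h v
      rw [tf, if_pos hv] at this
      simpa using this
    · intro v hv
      have := h v
      rwa [tf, if_neg hv] at this
  · rintro ⟨h1, h2⟩ v
    rcases eq_or_ne v.val 0 with h0 | h0
    · rw [tf, if_pos h0]; simp [h1 v h0]
    · rw [tf, if_neg h0]; exact h2 v h0

lemma prod_parent (T : IncTree r) :
    ∏ v ∈ Finset.univ.filter (fun v : Fin r => v.val ≠ 0),
      x ((T.val v).val + 1) = kappa T := by
  rw [kappa]
  rw [← Finset.prod_fiberwise_of_maps_to
    (s := Finset.univ.filter (fun v : Fin r => v.val ≠ 0))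
    (t := Finset.univ) (g := T.val) (fun i _ => Finset.mem_univ _)
    (fun v => x ((T.val v).val + 1))]
  refine Finset.prod_congr rfl fun i _ => ?_
  have h1 : ∀ v ∈ (Finset.univ.filter (fun v : Fin r => v.val ≠ 0)).filter
      (fun v => T.val v = i), x ((T.val v).val + 1) = x (i.val + 1) := by
    intro v hv
    rw [Finset.mem_filter] at hv
    rw [hv.2]
  rw [Finset.prod_congr rfl h1, Finset.prod_const]
  congr 1
  rw [sons, Finset.filter_filter]

lemma lhs_term (hr0 : 0 < r) (T : IncTree r) :
    y 1 1 * ∏ v ∈ Finset.univ.filter (fun v : Fin r => v.val ≠ 0),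
        (x ((T.val v).val + 1) * ∑ u ∈ hook T.val v, y (v.val + 1) (u.val + 1))
    = ∑ g ∈ Fintype.piFinset (tf T), kappa T * wy g := by
  rw [Finset.prod_mul_distrib, prod_parent T]
  rw [show y 1 1 * (kappa T *
      ∏ v ∈ Finset.univ.filter (fun v : Fin r => v.val ≠ 0),
        ∑ u ∈ hook T.val v, y (v.val + 1) (u.val + 1)) =
    kappa T * (y 1 1 *
      ∏ v ∈ Finset.univ.filter (fun v : Fin r => v.val ≠ 0),
        ∑ u ∈ hook T.val v, y (v.val + 1) (u.val + 1)) by ring]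
  have hsplit : y 1 1 * ∏ v ∈ Finset.univ.filter (fun v : Fin r => v.val ≠ 0),
      ∑ u ∈ hook T.val v, y (v.val + 1) (u.val + 1)
      = ∏ v : Fin r, ∑ u ∈ tf T v, y (v.val + 1) (u.val + 1) := by
    rw [← Finset.prod_filter_mul_prod_filter_not Finset.univ
      (fun v : Fin r => v.val = 0)
      (fun v => ∑ u ∈ tf T v, y (v.val + 1) (u.val + 1))]
    congr 1
    · have hz : Finset.univ.filter (fun v : Fin r => v.val = 0) =
          {(⟨0, hr0⟩ : Fin r)} := by
        ext v
        simp [Fin.ext_iff]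
      rw [hz, Finset.prod_singleton, tf, if_pos rfl, Finset.sum_singleton]
    · refine Finset.prod_congr rfl fun v hv => ?_
      rw [Finset.mem_filter] at hv
      rw [tf, if_neg hv.2]
  rw [hsplit, Finset.prod_univ_sum, Finset.mul_sum]
  rfl
end FGLaux

open FGLaux

/-- **Proposition 2.2(a) of Féray–Goulden–Lascoux.**  For `r ≥ 2`,
`y_{1,1} · L(x,y) = ∑_{π ∈ Π_1({1,…,r})} D(π) ∑_{T ∈ E(π)} κ(T)`. -/
theorem left_side_dominating_expansion (r : ℕ) (hr : 2 ≤ r) :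
    y 1 1 * ∑ T : IncTree r,
        ∏ v ∈ Finset.univ.filter (fun v : Fin r => v.val ≠ 0),
          x ((T.val v).val + 1) * ∑ u ∈ hook T.val v, y (v.val + 1) (u.val + 1)
    = ∑ π ∈ Finset.univ.filter (fun π : Finset (Finset (Fin r)) => IsPartition1 π),
        D π * ∑ T ∈ Finset.univ.filter (fun T : IncTree r => MemE T π), kappa T := by
  classical
  have hr0 : 0 < r := by omega
  -- Step 1: expand the left-hand side
  have hL : y 1 1 * ∑ T : IncTree r,
        ∏ v ∈ Finset.univ.filter (fun v : Fin r => v.val ≠ 0),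
          x ((T.val v).val + 1) * ∑ u ∈ hook T.val v, y (v.val + 1) (u.val + 1)
      = ∑ T : IncTree r, ∑ g ∈ Fintype.piFinset (tf T), kappa T * wy g := by
    rw [Finset.mul_sum]
    exact Finset.sum_congr rfl fun T _ => lhs_term hr0 T
  rw [hL]
  -- Step 2: expand D on the right-hand side
  have hR : ∑ π ∈ Finset.univ.filter (fun π : Finset (Finset (Fin r)) => IsPartition1 π),
        D π * ∑ T ∈ Finset.univ.filter (fun T : IncTree r => MemE T π), kappa T
      = ∑ π ∈ Finset.univ.filter (fun π : Finset (Finset (Fin r)) => IsPartition1 π),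
          ∑ g ∈ Finset.univ.filter
            (fun g : Fin r → Fin r => Dominating g ∧ InducesPartition g π),
            wy g * ∑ T ∈ Finset.univ.filter (fun T : IncTree r => MemE T π), kappa T := by
    refine Finset.sum_congr rfl fun π _ => ?_
    rw [D, Finset.sum_mul]
    rfl
  rw [hR]
  -- Step 3: swap the π and g summations
  rw [Finset.sum_comm' (t' := (Finset.univ : Finset (Fin r → Fin r)))
      (s' := fun g : Fin r → Fin r => Finset.univ.filter
        (fun π : Finset (Finset (Fin r)) =>
          IsPartition1 π ∧ Dominating g ∧ InducesPartition g π))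
      (h := by
        intro π g
        simp only [Finset.mem_filter, Finset.mem_univ, true_and, and_true]
        try tauto)]
  -- Step 4: collapse the inner π-sum to the canonical partition
  have hg : ∀ g : Fin r → Fin r,
      (∑ π ∈ Finset.univ.filter
          (fun π : Finset (Finset (Fin r)) =>
            IsPartition1 π ∧ Dominating g ∧ InducesPartition g π),
          wy g * ∑ T ∈ Finset.univ.filter (fun T : IncTree r => MemE T π), kappa T)
      = ∑ T ∈ Finset.univ.filter (fun T : IncTree r =>
            Dominating g ∧ (∀ v : Fin r, v.val = 0 → g v = v) ∧ MemE T (Pg g)),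
          kappa T * wy g := by
    intro g
    by_cases hc : Dominating g ∧ ∀ v : Fin r, v.val = 0 → g v = v
    · have hPf : Finset.univ.filter
          (fun π : Finset (Finset (Fin r)) =>
            IsPartition1 π ∧ Dominating g ∧ InducesPartition g π) = {Pg g} := by
        ext π
        simp only [Finset.mem_filter, Finset.mem_univ, true_and, Finset.mem_singleton]
        constructor
        · rintro ⟨hp1, _, hI⟩
          exact partition_unique hp1.1 hp1.2.1 hI
        · rintro rfl
          exact ⟨⟨fun B hB => Pg_nonempty hB, Pg_existsUnique g,
            zero_block hc.1 hc.2 hr0⟩, hc.1, induces_Pg g⟩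
      have hBf : Finset.univ.filter (fun T : IncTree r =>
            Dominating g ∧ (∀ v : Fin r, v.val = 0 → g v = v) ∧ MemE T (Pg g))
          = Finset.univ.filter (fun T : IncTree r => MemE T (Pg g)) := by
        refine Finset.filter_congr fun T _ => ?_
        exact ⟨fun h => h.2.2, fun h => ⟨hc.1, hc.2, h⟩⟩
      rw [hPf, hBf, Finset.sum_singleton, Finset.mul_sum]
      exact Finset.sum_congr rfl fun T _ => mul_comm _ _
    · have hPf : Finset.univ.filter
          (fun π : Finset (Finset (Fin r)) =>
            IsPartition1 π ∧ Dominating g ∧ InducesPartition g π) = ∅ := by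
        rw [Finset.filter_eq_empty_iff]
        rintro π - ⟨hp1, hd, hI⟩
        exact hc ⟨hd, hz_of_induces hp1 hI⟩
      have hBf : Finset.univ.filter (fun T : IncTree r =>
            Dominating g ∧ (∀ v : Fin r, v.val = 0 → g v = v) ∧ MemE T (Pg g)) = ∅ := by
        rw [Finset.filter_eq_empty_iff]
        rintro T - ⟨hd, hz, -⟩
        exact hc ⟨hd, hz⟩
      rw [hPf, hBf, Finset.sum_empty, Finset.sum_empty]
  rw [Finset.sum_congr rfl fun g _ => hg g]
  -- Step 5: swap back, using the key combinatorial equivalence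
  exact Finset.sum_comm' (by
    intro T g
    simp only [Finset.mem_univ, true_and, and_true, Finset.mem_filter]
    rw [mem_piFinset_tf]
    exact key_lemma T g)
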